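/- Let S : ℝⁿ ⇉ ℝᵐ be a set-valued mapping with closed graph and (x̄, ū) ∈ gph S. Then S is strongly metrically subregular at x̄ for ū (i.e., metrically subregular at x̄ for ū and x̄ is an isolated point of S^{-1}(ū)) if and only if DS(x̄ | ū)^{-1}(0) = {0}, where DS(x̄ | ū) is the graphical derivative of S at (x̄, ū). -/

import Mathlib

open Filter Topology
open scoped ENNReal NNReal

noncomputable section

abbrev En (n : ℕ) := EuclideanSpace ℝ (Fin n)

/-- The graphical derivative `DS(x | u)` of a set-valued mapping `S` at a
point `(x, u)` of its graph: `z ∈ DS(x|u)(w)` iff `(w, z)` is tangent to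
`gph S` at `(x, u)`. -/
def GraphDerivSV {n m : ℕ} (S : En n → Set (En m)) (x : En n) (u : En m)
    (w : En n) : Set (En m) :=
  {z | ∃ (t : ℕ → ℝ) (wk : ℕ → En n) (zk : ℕ → En m),
      Tendsto t atTop (nhdsWithin 0 (Set.Ioi 0)) ∧
      Tendsto wk atTop (nhds w) ∧ Tendsto zk atTop (nhds z) ∧
      ∀ k, u + t k • zk k ∈ S (x + t k • wk k)}

/-- a closed-graph set-valued mapping `S` is strongly metrically
subregular at `xb` for `ub` (metric subregularity plus isolatedness of `xb` in
`S⁻¹(ub)`) iff the graphical derivative is nonsingular: `DS(xb|ub)⁻¹(0) = {0}`. -/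
theorem statement_12 {n m : ℕ} (S : En n → Set (En m)) (xb : En n) (ub : En m)
    (hgraph : IsClosed {p : En n × En m | p.2 ∈ S p.1}) (hmem : ub ∈ S xb) :
    ((∃ κ : ℝ, 0 < κ ∧ ∃ δ : ℝ, 0 < δ ∧ ∀ x : En n, ‖x - xb‖ < δ →
        EMetric.infEdist x {y : En n | ub ∈ S y} ≤
          ENNReal.ofReal κ * EMetric.infEdist ub (S x)) ∧
      (∃ δ : ℝ, 0 < δ ∧ ∀ y : En n, ub ∈ S y → ‖y - xb‖ < δ → y = xb)) ↔
      {w : En n | (0 : En m) ∈ GraphDerivSV S xb ub w} = {0} := by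
  constructor
  · rintro ⟨⟨κ, hκ, δ₁, hδ₁, hsub⟩, δ₂, hδ₂, hiso⟩
    ext w
    simp only [Set.mem_setOf_eq, Set.mem_singleton_iff]
    constructor
    · rintro ⟨t, wk, zk, ht, hw, hz, hmemk⟩
      rw [tendsto_nhdsWithin_iff] at ht
      obtain ⟨ht0, htpos⟩ := ht
      -- main estimate: ∀ ε > 0, ‖w‖ ≤ ε
      have hle : ∀ ε : ℝ, 0 < ε → ‖w‖ ≤ ε := by
        intro ε hε
        have hzk0 : Tendsto (fun k => ‖zk k‖) atTop (𝓝 0) := by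
          simpa using hz.norm
        have hwkn : Tendsto (fun k => ‖wk k‖) atTop (𝓝 ‖w‖) := hw.norm
        have h2 : Tendsto (fun k => t k * ‖wk k‖) atTop (𝓝 0) := by
          simpa using ht0.mul hwkn
        have h3 : Tendsto (fun k => t k * (‖wk k‖ + κ * ‖zk k‖ + ε)) atTop (𝓝 0) := by
          have := ht0.mul ((hwkn.add ((tendsto_const_nhds (x := κ)).mul hzk0)).add
            (tendsto_const_nhds (x := ε)))
          simpa using this
        have hev : ∀ᶠ k in atTop, ‖wk k‖ ≤ κ * ‖zk k‖ + ε := by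
          filter_upwards [htpos, h2.eventually (gt_mem_nhds hδ₁),
            h3.eventually (gt_mem_nhds hδ₂)] with k hkpos hk1 hk2
          have htk : 0 < t k := hkpos
          set xk := xb + t k • wk k with hxk
          have hnorm : ‖xk - xb‖ = t k * ‖wk k‖ := by
            simp [hxk, norm_smul, abs_of_pos htk]
          have hd1 : ‖xk - xb‖ < δ₁ := by rw [hnorm]; exact hk1
          have hS : EMetric.infEdist ub (S xk) ≤ ENNReal.ofReal (t k * ‖zk k‖) := by
            calc EMetric.infEdist ub (S xk) ≤ edist ub (ub + t k • zk k) :=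
                EMetric.infEdist_le_edist_of_mem (hmemk k)
            _ = ENNReal.ofReal (t k * ‖zk k‖) := by
                simp [edist_dist, dist_eq_norm, norm_smul, abs_of_pos htk]
          have hchain : EMetric.infEdist xk {y : En n | ub ∈ S y} <
              ENNReal.ofReal (κ * (t k * ‖zk k‖) + ε * t k) := by
            calc EMetric.infEdist xk {y : En n | ub ∈ S y}
                ≤ ENNReal.ofReal κ * EMetric.infEdist ub (S xk) := hsub xk hd1
              _ ≤ ENNReal.ofReal κ * ENNReal.ofReal (t k * ‖zk k‖) := by gcongr
              _ = ENNReal.ofReal (κ * (t k * ‖zk k‖)) := by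
                  rw [← ENNReal.ofReal_mul hκ.le]
              _ < ENNReal.ofReal (κ * (t k * ‖zk k‖) + ε * t k) := by
                  rw [ENNReal.ofReal_lt_ofReal_iff_of_nonneg
                    (mul_nonneg hκ.le (mul_nonneg htk.le (norm_nonneg _)))]
                  nlinarith [norm_nonneg (zk k)]
          obtain ⟨y, hy, hyd⟩ := EMetric.infEdist_lt_iff.mp hchain
          rw [edist_dist, ENNReal.ofReal_lt_ofReal_iff_of_nonneg dist_nonneg,
            dist_eq_norm] at hyd
          have hynear : ‖y - xb‖ < δ₂ := by
            calc ‖y - xb‖ ≤ ‖y - xk‖ + ‖xk - xb‖ := by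
                  simpa [sub_add_sub_cancel] using norm_add_le (y - xk) (xk - xb)
              _ = ‖xk - y‖ + ‖xk - xb‖ := by rw [norm_sub_rev y xk]
              _ < (κ * (t k * ‖zk k‖) + ε * t k) + t k * ‖wk k‖ := by
                  rw [hnorm]; exact add_lt_add_of_lt_of_le hyd le_rfl
              _ = t k * (‖wk k‖ + κ * ‖zk k‖ + ε) := by ring
              _ < δ₂ := hk2
          have hyxb : y = xb := hiso y hy hynear
          subst hyxb
          rw [hnorm] at hyd
          have : t k * ‖wk k‖ < t k * (κ * ‖zk k‖ + ε) := by nlinarith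
          exact le_of_lt ((mul_lt_mul_iff_right₀ htk).mp this)
        have hlim : Tendsto (fun k => κ * ‖zk k‖ + ε) atTop (𝓝 ε) := by
          have := ((tendsto_const_nhds (x := κ)).mul hzk0).add
            (tendsto_const_nhds (x := ε))
          simpa using this
        exact le_of_tendsto_of_tendsto hwkn hlim hev
      have hle0 : ‖w‖ ≤ 0 := by
        by_contra h
        push_neg at h
        exact absurd (hle (‖w‖ / 2) (by linarith)) (by linarith)
      exact norm_eq_zero.mp (le_antisymm hle0 (norm_nonneg w))
    · rintro rfl
      refine ⟨fun k => 1 / (k + 1), fun _ => 0, fun _ => 0, ?_, tendsto_const_nhds,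
        tendsto_const_nhds, fun k => by simpa using hmem⟩
      rw [tendsto_nhdsWithin_iff]
      refine ⟨tendsto_one_div_add_atTop_nhds_zero_nat,
        Eventually.of_forall fun k => Set.mem_Ioi.mpr (by positivity)⟩
  · intro hD
    -- key pointwise estimate
    have key : ∃ κ : ℝ, 0 < κ ∧ ∃ δ : ℝ, 0 < δ ∧ ∀ x : En n, ‖x - xb‖ < δ →
        ENNReal.ofReal ‖x - xb‖ ≤ ENNReal.ofReal κ * EMetric.infEdist ub (S x) := by
      by_contra h
      push_neg at h
      have h' : ∀ k : ℕ, ∃ x : En n, ‖x - xb‖ < 1 / (k + 1) ∧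
          ENNReal.ofReal ((k : ℝ) + 1) * EMetric.infEdist ub (S x) <
            ENNReal.ofReal ‖x - xb‖ := by
        intro k
        obtain ⟨x, hx1, hx2⟩ := h ((k : ℝ) + 1) (by positivity) (1 / (k + 1)) (by positivity)
        exact ⟨x, hx1, hx2⟩
      choose x hx1 hx2 using h'
      set t := fun k => ‖x k - xb‖ with hT
      have htpos : ∀ k, 0 < t k := by
        intro k
        rcases (norm_nonneg (x k - xb)).lt_or_eq with h | h
        · exact h
        · exfalso
          have ht0 : t k = 0 := h.symm
          have h2 := hx2 k
          rw [show ‖x k - xb‖ = t k from rfl, ht0] at h2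
          simp at h2
      have hinf : ∀ k, EMetric.infEdist ub (S (x k)) < ENNReal.ofReal (t k / (k + 1)) := by
        intro k
        have hk1 : (0 : ℝ) < (k : ℝ) + 1 := by positivity
        have heq : ENNReal.ofReal (t k) =
            ENNReal.ofReal ((k : ℝ) + 1) * ENNReal.ofReal (t k / (k + 1)) := by
          rw [← ENNReal.ofReal_mul hk1.le]
          congr 1
          field_simp
        have := hx2 k
        rw [heq] at this
        exact (ENNReal.mul_lt_mul_iff_right (by simp [hk1]) (by simp)).mp this
      have hu : ∀ k, ∃ u ∈ S (x k), edist ub u < ENNReal.ofReal (t k / (k + 1)) := by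
        intro k
        exact EMetric.infEdist_lt_iff.mp (hinf k)
      choose u hu1 hu2 using hu
      set wk := fun k => (t k)⁻¹ • (x k - xb) with hWK
      set zk := fun k => (t k)⁻¹ • (u k - ub) with hZK
      have hwknorm : ∀ k, ‖wk k‖ = 1 := by
        intro k
        have : ‖wk k‖ = (t k)⁻¹ * ‖x k - xb‖ := by
          simp only [hWK, norm_smul, norm_inv, Real.norm_eq_abs, abs_of_pos (htpos k)]
        rw [this, show ‖x k - xb‖ = t k from rfl]
        exact inv_mul_cancel₀ (htpos k).ne'
      have hzknorm : ∀ k, ‖zk k‖ ≤ 1 / (k + 1) := by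
        intro k
        have h2 := hu2 k
        rw [edist_dist, ENNReal.ofReal_lt_ofReal_iff_of_nonneg dist_nonneg,
          dist_eq_norm, norm_sub_rev] at h2
        have hzeq : ‖zk k‖ = (t k)⁻¹ * ‖u k - ub‖ := by
          simp only [hZK, norm_smul, norm_inv, Real.norm_eq_abs, abs_of_pos (htpos k)]
        rw [hzeq, inv_mul_le_iff₀ (htpos k)]
        calc ‖u k - ub‖ ≤ t k / (k + 1) := h2.le
          _ = t k * (1 / (k + 1)) := by ring
      have ht0 : Tendsto t atTop (𝓝 0) := by
        apply squeeze_zero (fun k => (htpos k).le) (fun k => (hx1 k).le)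
        exact tendsto_one_div_add_atTop_nhds_zero_nat
      have hz0 : Tendsto zk atTop (𝓝 0) :=
        squeeze_zero_norm hzknorm tendsto_one_div_add_atTop_nhds_zero_nat
      -- extract convergent subsequence of wk
      have hball : ∀ k, wk k ∈ Metric.closedBall (0 : En n) 1 := by
        intro k
        simp [Metric.mem_closedBall, dist_eq_norm, hwknorm k]
      obtain ⟨w, -, φ, hφ, hwconv⟩ :=
        (isCompact_closedBall (0 : En n) 1).tendsto_subseq hball
      have hmemk : ∀ k, ub + t (φ k) • zk (φ k) ∈ S (xb + t (φ k) • wk (φ k)) := by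
        intro k
        have h1 : t (φ k) • zk (φ k) = u (φ k) - ub := by
          simp only [hZK]; exact smul_inv_smul₀ (htpos (φ k)).ne' _
        have h2 : t (φ k) • wk (φ k) = x (φ k) - xb := by
          simp only [hWK]; exact smul_inv_smul₀ (htpos (φ k)).ne' _
        rw [h1, h2, add_sub_cancel, add_sub_cancel]
        exact hu1 (φ k)
      have hwD : (0 : En m) ∈ GraphDerivSV S xb ub w := by
        refine ⟨t ∘ φ, wk ∘ φ, zk ∘ φ, ?_, hwconv, hz0.comp hφ.tendsto_atTop, hmemk⟩
        rw [tendsto_nhdsWithin_iff]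
        exact ⟨ht0.comp hφ.tendsto_atTop,
          Eventually.of_forall fun k => htpos (φ k)⟩
      have hw0 : w = 0 := by
        have : w ∈ ({0} : Set (En n)) := hD ▸ hwD
        simpa using this
      have hnorm1 : ‖w‖ = 1 := by
        have h1 : Tendsto (fun k => ‖wk (φ k)‖) atTop (𝓝 ‖w‖) := hwconv.norm
        have h2 : Tendsto (fun k => ‖wk (φ k)‖) atTop (𝓝 1) := by
          simpa [hwknorm] using tendsto_const_nhds (x := (1 : ℝ))
        exact tendsto_nhds_unique h1 h2
      rw [hw0] at hnorm1
      simp at hnorm1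
    obtain ⟨κ, hκ, δ, hδ, hkey⟩ := key
    refine ⟨⟨κ, hκ, δ, hδ, fun x hx => ?_⟩, ⟨δ, hδ, fun y hy hyn => ?_⟩⟩
    · calc EMetric.infEdist x {y : En n | ub ∈ S y} ≤ edist x xb :=
          EMetric.infEdist_le_edist_of_mem hmem
        _ = ENNReal.ofReal ‖x - xb‖ := by rw [edist_dist, dist_eq_norm]
        _ ≤ ENNReal.ofReal κ * EMetric.infEdist ub (S x) := hkey x hx
    · have h1 := hkey y hyn
      rw [show EMetric.infEdist ub (S y) = 0 from EMetric.infEdist_zero_of_mem hy, mul_zero, nonpos_iff_eq_zero,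
        ENNReal.ofReal_eq_zero] at h1
      have h2 : ‖y - xb‖ = 0 := le_antisymm h1 (norm_nonneg _)
      rw [norm_eq_zero, sub_eq_zero] at h2
      exact h2
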